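/- Let Φ : C → R be C¹ on an open convex set C ⊂ R^{2n+1} with coordinates (a_0,...,a_n,b_1,...,b_n), such that −∇Φ is strictly monotone. Let p_k ≥ 0, q_k ∈ R with p_k² + q_k² > 0 for 1 ≤ k ≤ n. Then the system ∂Φ/∂a_0 = 1, ∂Φ/∂a_k = (p_k a_k + q_k b_k)/(p_k²+q_k²), ∂Φ/∂b_k = (p_k b_k − q_k a_k)/(p_k²+q_k²) (1 ≤ k ≤ n) has at most one solution in C. -/

import Mathlib

open Real

theorem stmt_8 (n : ℕ) (p q : ℕ → ℝ)
    (hp : ∀ k, 1 ≤ k → k ≤ n → 0 ≤ p k)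
    (hpq : ∀ k, 1 ≤ k → k ≤ n → 0 < p k ^ 2 + q k ^ 2)
    (C : Set (EuclideanSpace ℝ (Fin (2 * n + 1)))) (hCo : IsOpen C) (hCc : Convex ℝ C)
    (Φ : EuclideanSpace ℝ (Fin (2 * n + 1)) → ℝ)
    (g : EuclideanSpace ℝ (Fin (2 * n + 1)) → EuclideanSpace ℝ (Fin (2 * n + 1)))
    (hg : ∀ x ∈ C, HasGradientAt Φ (g x) x)
    (hmono : ∀ x ∈ C, ∀ y ∈ C, (inner ℝ (g y - g x) (y - x) : ℝ) ≤ 0 ∧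
      ((inner ℝ (g y - g x) (y - x) : ℝ) = 0 ↔ x = y))
    (x y : EuclideanSpace ℝ (Fin (2 * n + 1))) (hx : x ∈ C) (hy : y ∈ C)
    (hxsol : g x ⟨0, by omega⟩ = 1 ∧ ∀ k, (h1 : 1 ≤ k) → (h2 : k ≤ n) →
      g x ⟨k, by omega⟩ =
        (p k * x ⟨k, by omega⟩ + q k * x ⟨n + k, by omega⟩) / (p k ^ 2 + q k ^ 2) ∧
      g x ⟨n + k, by omega⟩ =
        (p k * x ⟨n + k, by omega⟩ - q k * x ⟨k, by omega⟩) / (p k ^ 2 + q k ^ 2))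
    (hysol : g y ⟨0, by omega⟩ = 1 ∧ ∀ k, (h1 : 1 ≤ k) → (h2 : k ≤ n) →
      g y ⟨k, by omega⟩ =
        (p k * y ⟨k, by omega⟩ + q k * y ⟨n + k, by omega⟩) / (p k ^ 2 + q k ^ 2) ∧
      g y ⟨n + k, by omega⟩ =
        (p k * y ⟨n + k, by omega⟩ - q k * y ⟨k, by omega⟩) / (p k ^ 2 + q k ^ 2)) :
    x = y := by
  obtain ⟨hx0, hxk⟩ := hxsol
  obtain ⟨hy0, hyk⟩ := hysol
  obtain ⟨hle, hiff⟩ := hmono x hx y hy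
  apply hiff.mp
  apply le_antisymm hle
  have hinner : (inner ℝ (g y - g x) (y - x) : ℝ)
      = ∑ i : Fin (2*n+1), (g y i - g x i) * (y i - x i) := by
    simp [PiLp.inner_apply, PiLp.sub_apply, RCLike.inner_apply, mul_comm]
  rw [hinner]
  set F : ℕ → ℝ := fun i => if h : i < 2*n+1
    then (g y ⟨i, h⟩ - g x ⟨i, h⟩) * (y ⟨i, h⟩ - x ⟨i, h⟩) else 0 with hF
  have h1 : ∑ i : Fin (2*n+1), (g y i - g x i) * (y i - x i)
      = ∑ i ∈ Finset.range (2*n+1), F i := by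
    rw [← Fin.sum_univ_eq_sum_range]
    refine Finset.sum_congr rfl fun i _ => ?_
    simp [hF, i.isLt]
    intro h; have := i.isLt; omega
  rw [h1]
  have h2 : 2*n+1 = (1+n)+n := by omega
  rw [h2, Finset.sum_range_add, Finset.sum_range_add, Finset.sum_range_one]
  have hF0 : F 0 = 0 := by
    have hlt : (0:ℕ) < 2*n+1 := by omega
    have e1 : g x ⟨0, hlt⟩ = 1 := hx0
    have e2 : g y ⟨0, hlt⟩ = 1 := hy0
    simp only [hF, dif_pos hlt]
    rw [e1, e2]; ring
  rw [hF0, zero_add, ← Finset.sum_add_distrib]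
  refine Finset.sum_nonneg fun i hi => ?_
  rw [Finset.mem_range] at hi
  rw [show 1+i = i+1 from by omega, show 1+n+i = n+(i+1) from by omega]
  have hlt1 : i+1 < 2*n+1 := by omega
  have hlt2 : n+(i+1) < 2*n+1 := by omega
  simp only [hF]
  rw [dif_pos hlt1, dif_pos hlt2]
  obtain ⟨hxa, hxb⟩ := hxk (i+1) (by omega) (by omega)
  obtain ⟨hya, hyb⟩ := hyk (i+1) (by omega) (by omega)
  have hxa' : g x ⟨i+1, hlt1⟩ = (p (i+1) * x ⟨i+1, hlt1⟩ + q (i+1) * x ⟨n+(i+1), hlt2⟩)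
      / (p (i+1) ^ 2 + q (i+1) ^ 2) := hxa
  have hxb' : g x ⟨n+(i+1), hlt2⟩ = (p (i+1) * x ⟨n+(i+1), hlt2⟩ - q (i+1) * x ⟨i+1, hlt1⟩)
      / (p (i+1) ^ 2 + q (i+1) ^ 2) := hxb
  have hya' : g y ⟨i+1, hlt1⟩ = (p (i+1) * y ⟨i+1, hlt1⟩ + q (i+1) * y ⟨n+(i+1), hlt2⟩)
      / (p (i+1) ^ 2 + q (i+1) ^ 2) := hya
  have hyb' : g y ⟨n+(i+1), hlt2⟩ = (p (i+1) * y ⟨n+(i+1), hlt2⟩ - q (i+1) * y ⟨i+1, hlt1⟩)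
      / (p (i+1) ^ 2 + q (i+1) ^ 2) := hyb
  rw [hxa', hxb', hya', hyb']
  have hD : 0 < p (i+1) ^ 2 + q (i+1) ^ 2 := hpq (i+1) (by omega) (by omega)
  have hp' : 0 ≤ p (i+1) := hp (i+1) (by omega) (by omega)
  rw [div_sub_div_same, div_sub_div_same, div_mul_eq_mul_div, div_mul_eq_mul_div,
    ← add_div]
  apply div_nonneg _ hD.le
  nlinarith [mul_nonneg hp' (add_nonneg (sq_nonneg (y ⟨i+1, hlt1⟩ - x ⟨i+1, hlt1⟩))
    (sq_nonneg (y ⟨n+(i+1), hlt2⟩ - x ⟨n+(i+1), hlt2⟩)))]
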